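/- Let T>0 and let n≥2 be an integer, τ=T/n, t_k=kτ for k=0,…,n. Let s∈W²₂[0,T] with second derivative s''. Then ∑_{k=1}^{n-1} τ·((s(t_{k+1})−2s(t_k)+s(t_{k-1}))/τ²)² ≤ ∫₀ᵀ s''(t)² dt. -/

import Mathlib

open MeasureTheory Filter Topology


lemma triangle_swap (f : ℝ → ℝ) (c d : ℝ) (hcd : c ≤ d)
    (hf : IntegrableOn f (Set.Icc c d)) :
    ∫ t in c..d, (∫ v in c..t, f v) = ∫ v in c..d, (d - v) * f v := by
  set μ := volume.restrict (Set.Icc c d) with hμ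
  have hint : Integrable (Function.uncurry (fun t v => Set.indicator (Set.Iic t) f v)) (μ.prod μ) := by
    have hm : MeasurableSet {p : ℝ × ℝ | p.2 ≤ p.1} :=
      (isClosed_le continuous_snd continuous_fst).measurableSet
    have h1 : Integrable (fun _ : ℝ => (1:ℝ)) μ := integrable_const _
    have h2 : Integrable (fun z : ℝ × ℝ => (1:ℝ) * f z.2) (μ.prod μ) := h1.mul_prod hf
    have h3 := (h2.indicator hm)
    refine h3.congr ?_
    filter_upwards with p
    rcases p with ⟨t, v⟩
    simp only [Function.uncurry, Set.indicator_apply, Set.mem_Iic, Set.mem_setOf_eq, one_mul]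
  have swap := MeasureTheory.integral_integral_swap hint
  -- LHS
  have hL : ∫ t, (∫ v, Set.indicator (Set.Iic t) f v ∂μ) ∂μ = ∫ t in Set.Icc c d, (∫ v in c..t, f v) := by
    refine setIntegral_congr_fun measurableSet_Icc ?_
    intro t ht
    show (∫ v, Set.indicator (Set.Iic t) f v ∂μ) = ∫ v in c..t, f v
    rw [hμ, setIntegral_indicator measurableSet_Iic]
    have hset : Set.Icc c d ∩ Set.Iic t = Set.Icc c t := by
      ext x; simp only [Set.mem_inter_iff, Set.mem_Icc, Set.mem_Iic]
      constructor
      · rintro ⟨⟨h1, h2⟩, h3⟩; exact ⟨h1, h3⟩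
      · rintro ⟨h1, h2⟩; exact ⟨⟨h1, le_trans h2 ht.2⟩, h2⟩
    rw [hset]
    rw [intervalIntegral.integral_of_le ht.1, ← integral_Icc_eq_integral_Ioc]
  have hR : ∫ v, (∫ t, Set.indicator (Set.Iic t) f v ∂μ) ∂μ = ∫ v in Set.Icc c d, (d - v) * f v := by
    refine setIntegral_congr_fun measurableSet_Icc ?_
    intro v hv
    show (∫ t, Set.indicator (Set.Iic t) f v ∂μ) = (d - v) * f v
    have : (fun t => Set.indicator (Set.Iic t) f v) = Set.indicator (Set.Ici v) (fun _ => f v) := by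
      funext t
      simp only [Set.indicator_apply, Set.mem_Iic, Set.mem_Ici]
    rw [this, hμ, setIntegral_indicator measurableSet_Ici]
    have hset : Set.Icc c d ∩ Set.Ici v = Set.Icc v d := by
      ext x; simp only [Set.mem_inter_iff, Set.mem_Icc, Set.mem_Ici]
      constructor
      · rintro ⟨⟨h1, h2⟩, h3⟩; exact ⟨h3, h2⟩
      · rintro ⟨h1, h2⟩; exact ⟨⟨le_trans hv.1 h1, h2⟩, h1⟩
    rw [hset, setIntegral_const]
    rw [measureReal_def, Real.volume_Icc, ENNReal.toReal_ofReal (by linarith [hv.2])]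
    simp [smul_eq_mul]
  rw [hL, hR] at swap
  rw [intervalIntegral.integral_of_le hcd, intervalIntegral.integral_of_le hcd,
    ← integral_Icc_eq_integral_Ioc, ← integral_Icc_eq_integral_Ioc]
  exact swap



lemma stepA (T : ℝ) (s s' s'' : ℝ → ℝ)
    (hs : ∀ t ∈ Set.Icc (0:ℝ) T, HasDerivWithinAt s (s' t) (Set.Icc (0:ℝ) T) t)
    (hs''int : IntervalIntegrable s'' volume 0 T)
    (hftc : ∀ a b : ℝ, 0 ≤ a → a ≤ b → b ≤ T → s' b - s' a = ∫ t in a..b, s'' t)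
    (c d : ℝ) (h0 : 0 ≤ c) (hcd : c ≤ d) (hdT : d ≤ T) :
    s d - s c - (d - c) * s' c = ∫ v in c..d, (d - v) * s'' v := by
  have hsub : Set.Icc c d ⊆ Set.Icc (0:ℝ) T := Set.Icc_subset_Icc h0 hdT
  have hsubu : Set.uIcc c d ⊆ Set.uIcc (0:ℝ) T := by
    rw [Set.uIcc_of_le hcd, Set.uIcc_of_le (le_trans h0 (le_trans hcd hdT))]
    exact hsub
  have hs''cd : IntervalIntegrable s'' volume c d := hs''int.mono_set hsubu
  have hs''cdOn : IntegrableOn s'' (Set.Icc c d) :=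
    (intervalIntegrable_iff_integrableOn_Icc_of_le hcd).1 hs''cd
  -- g x = ∫_c^x s''
  set g : ℝ → ℝ := fun x => ∫ v in c..x, s'' v with hg
  have hgcont : ContinuousOn g (Set.Icc c d) := by
    have := intervalIntegral.continuousOn_primitive_interval (a := c) (b := d)
      (f := s'') (μ := volume) (by rwa [Set.uIcc_of_le hcd])
    rwa [Set.uIcc_of_le hcd] at this
  have hs'eq : ∀ x ∈ Set.Icc c d, s' x = s' c + g x := by
    intro x hx
    have := hftc c x h0 hx.1 (le_trans hx.2 hdT)
    simp only [hg]; linarith [this]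
  have hs'cont : ContinuousOn s' (Set.Icc c d) :=
    (continuousOn_const.add hgcont).congr hs'eq
  have hs'int : IntervalIntegrable s' volume c d := by
    apply ContinuousOn.intervalIntegrable
    rwa [Set.uIcc_of_le hcd]
  -- FTC for s
  have hscont : ContinuousOn s (Set.Icc c d) := fun x hx =>
    ((hs x (hsub hx)).continuousWithinAt).mono hsub
  have hderiv : ∀ x ∈ Set.Ioo c d, HasDerivWithinAt s (s' x) (Set.Ioi x) x := by
    intro x hx
    have hx' : x ∈ Set.Icc (0:ℝ) T := ⟨le_trans h0 (le_of_lt hx.1), le_trans (le_of_lt hx.2) hdT⟩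
    have hnx : Set.Icc (0:ℝ) T ∈ nhds x := by
      apply Icc_mem_nhds
      · exact lt_of_le_of_lt h0 hx.1
      · exact lt_of_lt_of_le hx.2 hdT
    exact ((hs x hx').hasDerivAt hnx).hasDerivWithinAt
  have hftc2 : ∫ y in c..d, s' y = s d - s c :=
    intervalIntegral.integral_eq_sub_of_hasDeriv_right_of_le hcd hscont hderiv hs'int
  have hgint : IntervalIntegrable g volume c d := by
    apply ContinuousOn.intervalIntegrable
    rwa [Set.uIcc_of_le hcd]
  have hsplit : ∫ y in c..d, s' y = (d - c) * s' c + ∫ y in c..d, g y := by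
    have : ∫ y in c..d, s' y = ∫ y in c..d, (s' c + g y) := by
      apply intervalIntegral.integral_congr
      intro y hy
      rw [Set.uIcc_of_le hcd] at hy
      exact hs'eq y hy
    rw [this, intervalIntegral.integral_add (intervalIntegrable_const) hgint,
      intervalIntegral.integral_const, smul_eq_mul]
  have hswap := triangle_swap s'' c d hcd hs''cdOn
  have hgl : ∫ y in c..d, g y = ∫ v in c..d, (d - v) * s'' v := hswap
  rw [← hftc2, hsplit, hgl]
  ring


lemma cs_weighted (w f : ℝ → ℝ) (a b : ℝ) (hab : a ≤ b)
    (hw : ContinuousOn w (Set.uIcc a b)) (hw0 : ∀ t, 0 ≤ w t)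
    (hf : IntervalIntegrable f volume a b)
    (hf2 : IntervalIntegrable (fun t => (f t)^2) volume a b) :
    (∫ t in a..b, w t * f t)^2 ≤ (∫ t in a..b, w t) * (∫ t in a..b, w t * (f t)^2) := by
  have iwf : IntervalIntegrable (fun t => w t * f t) volume a b := hf.continuousOn_mul hw
  have iwf2 : IntervalIntegrable (fun t => w t * (f t)^2) volume a b := hf2.continuousOn_mul hw
  have iw : IntervalIntegrable w volume a b := hw.intervalIntegrable
  set A := ∫ t in a..b, w t * (f t)^2 with hA
  set B := ∫ t in a..b, w t * f t with hB
  set C := ∫ t in a..b, w t with hC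
  have key : ∀ x : ℝ, 0 ≤ A * (x * x) + (-2 * B) * x + C := by
    intro x
    have hpt : ∀ t, (w t * (f t)^2) * (x * x) + (-2 * (w t * f t)) * x + w t
        = w t * (x * f t - 1)^2 := by intro t; ring
    have h1 : (0:ℝ) ≤ ∫ t in a..b, w t * (x * f t - 1)^2 := by
      apply intervalIntegral.integral_nonneg hab
      intro t _
      exact mul_nonneg (hw0 t) (sq_nonneg _)
    have h2 : ∫ t in a..b, w t * (x * f t - 1)^2
        = A * (x * x) + (-2 * B) * x + C := by
      have : (fun t => w t * (x * f t - 1)^2)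
          = fun t => (x*x) * (w t * (f t)^2) + ((-2*x) * (w t * f t) + w t) := by
        funext t; ring
      rw [this, intervalIntegral.integral_add ((iwf2.const_mul _))
        (((iwf.const_mul _)).add iw),
        intervalIntegral.integral_add ((iwf.const_mul _)) iw,
        intervalIntegral.integral_const_mul, intervalIntegral.integral_const_mul]
      ring
    linarith [h2 ▸ h1]
  have hd := discrim_le_zero key
  rw [discrim] at hd
  nlinarith [hd]


noncomputable def hat (τ m t : ℝ) : ℝ := max 0 (τ - |t - m|)

lemma hat_nonneg (τ m t : ℝ) : 0 ≤ hat τ m t := le_max_left _ _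

lemma hat_cont (τ m : ℝ) : Continuous (hat τ m) :=
  continuous_const.max (continuous_const.sub ((continuous_id.sub continuous_const).abs))

lemma hat_zero (τ m t : ℝ) (h : τ ≤ |t - m|) : hat τ m t = 0 :=
  max_eq_left (by linarith)

lemma hat_left (τ m t : ℝ) (h1 : m - τ ≤ t) (h2 : t ≤ m) : hat τ m t = t - (m - τ) := by
  have : |t - m| = m - t := by rw [abs_sub_comm]; exact abs_of_nonneg (by linarith)
  rw [hat, this, max_eq_right (by linarith)]; ring

lemma hat_right (τ m t : ℝ) (h1 : m ≤ t) (h2 : t ≤ m + τ) : hat τ m t = (m + τ) - t := by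
  have : |t - m| = t - m := abs_of_nonneg (by linarith)
  rw [hat, this, max_eq_right (by linarith)]; ring

lemma hat_integral (τ m : ℝ) (hτ : 0 < τ) :
    ∫ t in (m-τ)..(m+τ), hat τ m t = τ^2 := by
  have h1 : ∫ t in (m-τ)..m, hat τ m t = τ^2/2 := by
    rw [intervalIntegral.integral_congr (g := fun t => t - (m - τ)) ?_]
    · rw [intervalIntegral.integral_sub (continuous_id'.intervalIntegrable _ _) intervalIntegrable_const,
        integral_id, intervalIntegral.integral_const, smul_eq_mul]
      ring
    · intro t ht
      rw [Set.uIcc_of_le (by linarith)] at ht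
      exact hat_left τ m t ht.1 ht.2
  have h2 : ∫ t in m..(m+τ), hat τ m t = τ^2/2 := by
    rw [intervalIntegral.integral_congr (g := fun t => (m + τ) - t) ?_]
    · rw [intervalIntegral.integral_sub intervalIntegrable_const (continuous_id'.intervalIntegrable _ _),
        integral_id, intervalIntegral.integral_const, smul_eq_mul]
      ring
    · intro t ht
      rw [Set.uIcc_of_le (by linarith)] at ht
      exact hat_right τ m t ht.1 ht.2
  rw [← intervalIntegral.integral_add_adjacent_intervals
    (a := m - τ) (b := m) (c := m + τ) ?_ ?_, h1, h2]
  · ring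
  · exact ((hat_cont τ m).continuousOn).intervalIntegrable
  · exact ((hat_cont τ m).continuousOn).intervalIntegrable

lemma hat_sum_le (τ : ℝ) (hτ : 0 < τ) (n : ℕ) (t : ℝ) (ht : 0 ≤ t) :
    ∑ k ∈ Finset.Icc 1 (n-1), hat τ ((k:ℝ)*τ) t ≤ τ := by
  set j : ℕ := ⌊t/τ⌋.toNat with hj
  have hfl : (⌊t/τ⌋ : ℝ) ≤ t/τ := Int.floor_le _
  have hfl2 : t/τ < ⌊t/τ⌋ + 1 := Int.lt_floor_add_one _
  have hj0 : (0:ℤ) ≤ ⌊t/τ⌋ := Int.floor_nonneg.2 (div_nonneg ht hτ.le)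
  have hjc : ((j:ℤ) : ℝ) = (⌊t/τ⌋ : ℝ) := by rw [hj]; exact_mod_cast congrArg Int.cast (Int.toNat_of_nonneg hj0)
  have hjr : (j:ℝ) ≤ t/τ := by rw [← hjc] at hfl; exact_mod_cast hfl
  have hjr2 : t/τ ≤ (j:ℝ) + 1 := by
    rw [← hjc] at hfl2; exact_mod_cast hfl2.le
  have h1 : (j:ℝ)*τ ≤ t := by
    calc (j:ℝ)*τ ≤ (t/τ)*τ := by nlinarith
    _ = t := div_mul_cancel₀ t hτ.ne'
  have h2 : t ≤ ((j:ℝ)+1)*τ := by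
    calc t = (t/τ)*τ := (div_mul_cancel₀ t hτ.ne').symm
    _ ≤ ((j:ℝ)+1)*τ := by nlinarith
  have hzero : ∀ k ∈ Finset.Icc 1 (n-1), k ∉ ({j, j+1} : Finset ℕ) →
      hat τ ((k:ℝ)*τ) t = 0 := by
    intro k _ hk
    simp only [Finset.mem_insert, Finset.mem_singleton] at hk
    push_neg at hk
    apply hat_zero
    rcases lt_or_ge k j with h | h
    · have : (k:ℝ) + 1 ≤ j := by exact_mod_cast h
      rw [abs_of_nonneg (by nlinarith)]
      nlinarith
    · have : j + 1 < k := lt_of_le_of_ne (lt_of_le_of_ne h (Ne.symm hk.1)) (Ne.symm hk.2)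
      have : ((j:ℝ)) + 2 ≤ k := by exact_mod_cast this
      rw [abs_of_nonpos (by nlinarith)]
      nlinarith
  have hsub : ∑ k ∈ Finset.Icc 1 (n-1), hat τ ((k:ℝ)*τ) t
      = ∑ k ∈ Finset.Icc 1 (n-1) ∩ {j, j+1}, hat τ ((k:ℝ)*τ) t := by
    refine (Finset.sum_subset (Finset.inter_subset_left) ?_).symm
    intro x hx hnx
    refine hzero x hx ?_
    intro hmem
    exact hnx (Finset.mem_inter.2 ⟨hx, hmem⟩)
  rw [hsub]
  have hle : ∑ k ∈ Finset.Icc 1 (n-1) ∩ {j, j+1}, hat τ ((k:ℝ)*τ) t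
      ≤ ∑ k ∈ ({j, j+1} : Finset ℕ), hat τ ((k:ℝ)*τ) t := by
    apply Finset.sum_le_sum_of_subset_of_nonneg (Finset.inter_subset_right)
    intro i _ _; exact hat_nonneg _ _ _
  refine le_trans hle ?_
  rw [Finset.sum_pair (by omega)]
  have e1 : hat τ ((j:ℝ)*τ) t = τ - (t - (j:ℝ)*τ) := by
    rw [hat_right τ ((j:ℝ)*τ) t h1 (by push_cast at h2 ⊢; linarith)]; ring
  have e2 : hat τ (((j:ℕ)+1:ℕ)*τ) t = τ - (((j:ℝ)+1)*τ - t) := by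
    have : (((j:ℕ)+1:ℕ):ℝ) = (j:ℝ)+1 := by push_cast; ring
    rw [this]
    rw [hat_left τ (((j:ℝ)+1)*τ) t (by push_cast at h1 ⊢; linarith) h2]
    ring
  rw [e1, e2]
  ring_nf
  push_cast
  linarith


/-- the discrete second-difference quotients of `s` on the uniform grid
are bounded in the discrete `L²` norm by the `L²` norm of `s''` (inequality (2.9)). -/
theorem stmt_0 (T : ℝ) (hT : 0 < T) (n : ℕ) (hn : 2 ≤ n) (τ : ℝ) (hτ : τ = T / n)
    (s s' s'' : ℝ → ℝ)
    (hs : ∀ t ∈ Set.Icc (0:ℝ) T, HasDerivWithinAt s (s' t) (Set.Icc (0:ℝ) T) t)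
    (hs''int : IntervalIntegrable s'' volume 0 T)
    (hs''sq : IntervalIntegrable (fun t => (s'' t)^2) volume 0 T)
    (hftc : ∀ a b : ℝ, 0 ≤ a → a ≤ b → b ≤ T → s' b - s' a = ∫ t in a..b, s'' t) :
    ∑ k ∈ Finset.Icc 1 (n-1),
        τ * ((s (((k:ℝ)+1)*τ) - 2 * s ((k:ℝ)*τ) + s (((k:ℝ)-1)*τ)) / τ^2)^2
      ≤ ∫ t in (0:ℝ)..T, (s'' t)^2 := by
  have hn0 : (0:ℝ) < n := by positivity
  have hτpos : 0 < τ := by rw [hτ]; positivity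
  have hTn : T = n * τ := by rw [hτ]; field_simp
  have h0T : (0:ℝ) ≤ T := hT.le
  -- per k bound
  have key : ∀ k ∈ Finset.Icc 1 (n-1),
      τ * ((s (((k:ℝ)+1)*τ) - 2 * s ((k:ℝ)*τ) + s (((k:ℝ)-1)*τ)) / τ^2)^2
        ≤ (1/τ) * ∫ t in (0:ℝ)..T, hat τ ((k:ℝ)*τ) t * (s'' t)^2 := by
    intro k hk
    rw [Finset.mem_Icc] at hk
    have hk1 : (1:ℝ) ≤ (k:ℝ) := by exact_mod_cast hk.1
    have hk2 : (k:ℝ) + 1 ≤ n := by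
      have : k + 1 ≤ n := by omega
      exact_mod_cast this
    set m : ℝ := (k:ℝ)*τ with hm
    have ha0 : 0 ≤ m - τ := by nlinarith
    have ham : m - τ ≤ m := by linarith
    have hmb : m ≤ m + τ := by linarith
    have hbT : m + τ ≤ T := by rw [hTn]; nlinarith
    have hmT : m ≤ T := le_trans hmb hbT
    have h0m : 0 ≤ m := le_trans ha0 ham
    -- representation
    have e1 : s (m+τ) - s m - τ * s' m = ∫ v in m..(m+τ), ((m+τ) - v) * s'' v := by
      have := stepA T s s' s'' hs hs''int hftc m (m+τ) h0m hmb hbT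
      convert this using 2; ring
    have e2 : s m - s (m-τ) - τ * s' (m-τ) = ∫ v in (m-τ)..m, (m - v) * s'' v := by
      have := stepA T s s' s'' hs hs''int hftc (m-τ) m ha0 ham hmT
      convert this using 2; ring
    have e3 : s' m - s' (m-τ) = ∫ v in (m-τ)..m, s'' v := hftc (m-τ) m ha0 ham hmT
    have hsub1 : Set.uIcc (m-τ) m ⊆ Set.uIcc (0:ℝ) T := by
      rw [Set.uIcc_of_le ham, Set.uIcc_of_le h0T]
      exact Set.Icc_subset_Icc ha0 hmT
    have hsub2 : Set.uIcc m (m+τ) ⊆ Set.uIcc (0:ℝ) T := by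
      rw [Set.uIcc_of_le hmb, Set.uIcc_of_le h0T]
      exact Set.Icc_subset_Icc h0m hbT
    have hsub3 : Set.uIcc (m-τ) (m+τ) ⊆ Set.uIcc (0:ℝ) T := by
      rw [Set.uIcc_of_le (le_trans ham hmb), Set.uIcc_of_le h0T]
      exact Set.Icc_subset_Icc ha0 hbT
    have hi1 : IntervalIntegrable s'' volume (m-τ) m := hs''int.mono_set hsub1
    have iva : IntervalIntegrable (fun v => (v - (m-τ)) * s'' v) volume (m-τ) m := by
      apply hi1.continuousOn_mul
      exact (continuous_id'.sub continuous_const).continuousOn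
    have imv : IntervalIntegrable (fun v => (m - v) * s'' v) volume (m-τ) m := by
      apply hi1.continuousOn_mul
      exact (continuous_const.sub continuous_id').continuousOn
    have hadd : (∫ v in (m-τ)..m, (v - (m-τ)) * s'' v) + (∫ v in (m-τ)..m, (m - v) * s'' v)
        = τ * ∫ v in (m-τ)..m, s'' v := by
      rw [← intervalIntegral.integral_add iva imv, ← intervalIntegral.integral_const_mul]
      apply intervalIntegral.integral_congr
      intro v hv
      show (v - (m-τ)) * s'' v + (m - v) * s'' v = τ * s'' v
      ring
    have e2' : s m - s (m-τ) - τ * s' m = - ∫ v in (m-τ)..m, (v - (m-τ)) * s'' v := by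
      have h3 := e3
      nlinarith [e2, hadd]
    -- D = ∫ hat * s''
    have erepr : s (m+τ) - 2 * s m + s (m-τ)
        = ∫ v in (m-τ)..(m+τ), hat τ m v * s'' v := by
      have c1 : ∫ v in (m-τ)..m, hat τ m v * s'' v
          = ∫ v in (m-τ)..m, (v - (m-τ)) * s'' v := by
        apply intervalIntegral.integral_congr
        intro v hv
        rw [Set.uIcc_of_le ham] at hv
        show hat τ m v * s'' v = (v - (m-τ)) * s'' v
        rw [hat_left τ m v hv.1 hv.2]
      have c2 : ∫ v in m..(m+τ), hat τ m v * s'' v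
          = ∫ v in m..(m+τ), ((m+τ) - v) * s'' v := by
        apply intervalIntegral.integral_congr
        intro v hv
        rw [Set.uIcc_of_le hmb] at hv
        show hat τ m v * s'' v = ((m+τ) - v) * s'' v
        rw [hat_right τ m v hv.1 hv.2]
      have hadj := intervalIntegral.integral_add_adjacent_intervals
        (a := m-τ) (b := m) (c := m+τ) (f := fun v => hat τ m v * s'' v)
        (hi1.continuousOn_mul ((hat_cont τ m).continuousOn))
        ((hs''int.mono_set hsub2).continuousOn_mul ((hat_cont τ m).continuousOn))
      rw [← hadj, c1, c2]
      linarith [e1, e2']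
    -- Cauchy-Schwarz
    have hcs := cs_weighted (hat τ m) s'' (m-τ) (m+τ) (le_trans ham hmb)
      ((hat_cont τ m).continuousOn) (hat_nonneg τ m)
      (hs''int.mono_set hsub3) (hs''sq.mono_set hsub3)
    rw [hat_integral τ m hτpos] at hcs
    -- extension of the integral to [0,T]
    have hext : ∫ v in (m-τ)..(m+τ), hat τ m v * (s'' v)^2
        = ∫ t in (0:ℝ)..T, hat τ m t * (s'' t)^2 := by
      have z1 : ∫ v in (0:ℝ)..(m-τ), hat τ m v * (s'' v)^2 = 0 := by
        rw [intervalIntegral.integral_congr (g := fun _ => (0:ℝ)), intervalIntegral.integral_zero]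
        intro v hv
        rw [Set.uIcc_of_le ha0] at hv
        show hat τ m v * (s'' v)^2 = 0
        rw [hat_zero τ m v (by rw [abs_sub_comm, abs_of_nonneg (by linarith [hv.2])]; linarith [hv.2]), zero_mul]
      have z2 : ∫ v in (m+τ)..T, hat τ m v * (s'' v)^2 = 0 := by
        rw [intervalIntegral.integral_congr (g := fun _ => (0:ℝ)), intervalIntegral.integral_zero]
        intro v hv
        rw [Set.uIcc_of_le hbT] at hv
        show hat τ m v * (s'' v)^2 = 0
        rw [hat_zero τ m v (by rw [abs_of_nonneg (by linarith [hv.1])]; linarith [hv.1]), zero_mul]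
      have i1 : IntervalIntegrable (fun v => hat τ m v * (s'' v)^2) volume 0 (m-τ) := by
        apply IntervalIntegrable.continuousOn_mul _ ((hat_cont τ m).continuousOn)
        apply hs''sq.mono_set
        rw [Set.uIcc_of_le ha0, Set.uIcc_of_le h0T]
        exact Set.Icc_subset_Icc le_rfl (le_trans ham hmT)
      have i2 : IntervalIntegrable (fun v => hat τ m v * (s'' v)^2) volume (m-τ) (m+τ) :=
        (hs''sq.mono_set hsub3).continuousOn_mul ((hat_cont τ m).continuousOn)
      have i3 : IntervalIntegrable (fun v => hat τ m v * (s'' v)^2) volume (m+τ) T := by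
        apply IntervalIntegrable.continuousOn_mul _ ((hat_cont τ m).continuousOn)
        apply hs''sq.mono_set
        rw [Set.uIcc_of_le hbT, Set.uIcc_of_le h0T]
        exact Set.Icc_subset_Icc (le_trans h0m hmb) le_rfl
      have hadj1 := intervalIntegral.integral_add_adjacent_intervals i1 i2
      have hadj2 := intervalIntegral.integral_add_adjacent_intervals
        (i1.trans i2) i3
      rw [← hadj2, ← hadj1, z1, z2]
      ring
    -- combine
    have hD2 : (s (((k:ℝ)+1)*τ) - 2 * s ((k:ℝ)*τ) + s (((k:ℝ)-1)*τ))
        = s (m+τ) - 2 * s m + s (m-τ) := by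
      rw [hm]; ring_nf
    rw [hD2]
    rw [erepr]
    rw [← hext]
    set B := ∫ v in (m-τ)..(m+τ), hat τ m v * s'' v with hB
    set A := ∫ v in (m-τ)..(m+τ), hat τ m v * (s'' v)^2 with hA
    have hA0 : 0 ≤ A := by
      apply intervalIntegral.integral_nonneg (le_trans ham hmb)
      intro t _
      exact mul_nonneg (hat_nonneg _ _ _) (sq_nonneg _)
    have : τ * (B/τ^2)^2 = B^2 / τ^3 := by field_simp
    rw [this]
    rw [div_le_iff₀ (by positivity)]
    calc B^2 ≤ τ^2 * A := hcs
    _ = (1/τ) * A * τ^3 := by field_simp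
  -- sum up
  have hsum := Finset.sum_le_sum key
  refine le_trans hsum ?_
  have hint : ∀ k ∈ Finset.Icc 1 (n-1),
      IntervalIntegrable (fun t => hat τ ((k:ℝ)*τ) t * (s'' t)^2) volume 0 T :=
    fun k _ => hs''sq.continuousOn_mul ((hat_cont τ _).continuousOn)
  rw [← Finset.mul_sum, ← intervalIntegral.integral_finset_sum hint]
  have hmono : ∫ t in (0:ℝ)..T, (∑ k ∈ Finset.Icc 1 (n-1), hat τ ((k:ℝ)*τ) t * (s'' t)^2)
      ≤ ∫ t in (0:ℝ)..T, τ * (s'' t)^2 := by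
    apply intervalIntegral.integral_mono_on h0T
    · have h := IntervalIntegrable.sum (Finset.Icc 1 (n-1)) hint
      have heq : (∑ i ∈ Finset.Icc 1 (n-1), fun t => hat τ ((i:ℝ)*τ) t * (s'' t)^2)
          = fun u => ∑ k ∈ Finset.Icc 1 (n-1), hat τ ((k:ℝ)*τ) u * (s'' u)^2 := by
        funext u; simp
      rwa [heq] at h
    · exact hs''sq.const_mul τ
    · intro t ht
      have := hat_sum_le τ hτpos n t ht.1
      calc ∑ k ∈ Finset.Icc 1 (n-1), hat τ ((k:ℝ)*τ) t * (s'' t)^2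
          = (∑ k ∈ Finset.Icc 1 (n-1), hat τ ((k:ℝ)*τ) t) * (s'' t)^2 := by
            rw [Finset.sum_mul]
      _ ≤ τ * (s'' t)^2 := by
            apply mul_le_mul_of_nonneg_right this (sq_nonneg _)
  calc (1/τ) * ∫ t in (0:ℝ)..T, (∑ k ∈ Finset.Icc 1 (n-1), hat τ ((k:ℝ)*τ) t * (s'' t)^2)
      ≤ (1/τ) * ∫ t in (0:ℝ)..T, τ * (s'' t)^2 := by
        apply mul_le_mul_of_nonneg_left hmono (by positivity)
  _ = ∫ t in (0:ℝ)..T, (s'' t)^2 := by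
        rw [intervalIntegral.integral_const_mul]
        field_simp
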